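/- ∑_{k=0}^∞ (3/2)_k^2 (−1/2)_k / [(k!)^2 · (k+1)!] · (2k+1)/(−8)^k = 8√2/(3π). -/

import Mathlib

open Finset Filter Topology

/-- The Pochhammer symbol `(x)ₖ = x (x+1) ⋯ (x+k-1)`, with `(x)₀ = 1`. -/
noncomputable def poch (x : ℝ) (k : ℕ) : ℝ :=
  ∏ i ∈ Finset.range k, (x + i)

lemma poch_zero (x : ℝ) : poch x 0 = 1 := by simp [poch]

lemma poch_succ (x : ℝ) (k : ℕ) : poch x (k+1) = poch x k * (x + k) := by
  simp [poch, Finset.prod_range_succ]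

lemma poch_shift (x : ℝ) (k : ℕ) : poch x (k+1) = x * poch (x+1) k := by
  induction k with
  | zero => simp [poch]
  | succ k ih =>
      rw [poch_succ, ih, poch_succ]
      push_cast
      ring

lemma poch_pos {x : ℝ} (hx : 0 < x) (k : ℕ) : 0 < poch x k := by
  induction k with
  | zero => simp [poch_zero]
  | succ k ih =>
      rw [poch_succ]
      have : (0:ℝ) < x + k := by positivity
      exact mul_pos ih this

lemma poch_half_pos (k : ℕ) : 0 < poch (1/2) k := poch_pos (by norm_num) k

lemma poch_half_le_factorial (k : ℕ) : poch (1/2) k ≤ (k.factorial : ℝ) := by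
  induction k with
  | zero => simp [poch_zero]
  | succ k ih =>
      rw [poch_succ, Nat.factorial_succ]
      push_cast
      have h1 : (0:ℝ) < poch (1/2) k := poch_half_pos k
      have h2 : (1/2 : ℝ) + k ≤ (k:ℝ) + 1 := by linarith
      have h3 : (0:ℝ) ≤ (1/2 : ℝ) + k := by positivity
      calc poch (1/2) k * (1/2 + (k:ℝ)) ≤ (k.factorial : ℝ) * ((k:ℝ)+1) := by
            apply mul_le_mul ih h2 h3 (by positivity)
        _ = ((k:ℝ)+1) * (k.factorial : ℝ) := by ring

lemma poch_two_shift (x : ℝ) (k : ℕ) :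
    poch x k * (x + k) * (x + k + 1) = x * (x+1) * poch (x+2) k := by
  have h1 : poch x (k+2) = poch x k * (x + k) * (x + k + 1) := by
    rw [poch_succ, poch_succ]
    push_cast
    ring
  have h2 : poch x (k+2) = x * (x+1) * poch (x+2) k := by
    rw [poch_shift, poch_shift]
    ring_nf
  rw [← h1, h2]

lemma poch_three_halves (k : ℕ) : poch (3/2) k = (2*(k:ℝ)+1) * poch (1/2) k := by
  induction k with
  | zero => norm_num [poch_zero]
  | succ k ih =>
      rw [poch_succ, ih, poch_succ]
      push_cast
      ring

lemma two_k_sub_one_ne (k : ℕ) : (2*(k:ℝ) - 1) ≠ 0 := by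
  cases k with
  | zero => norm_num
  | succ k =>
      push_cast
      have : (0:ℝ) ≤ (k:ℝ) := Nat.cast_nonneg k
      intro h
      nlinarith

lemma poch_neg_half (k : ℕ) : poch (-(1/2)) k * (2*(k:ℝ) - 1) = - poch (1/2) k := by
  induction k with
  | zero => norm_num [poch_zero]
  | succ k ih =>
      have hne := two_k_sub_one_ne k
      have hih : poch (-(1/2)) k = - poch (1/2) k / (2*(k:ℝ) - 1) := by
        field_simp at ih ⊢
        linarith [ih]
      rw [poch_succ, poch_succ, hih]
      push_cast
      field_simp
      ring
noncomputable def dd (k : ℕ) : ℝ := poch (1/2) k ^ 3 * (-(1/8 : ℝ)) ^ k / ((k.factorial : ℝ)) ^ 3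

noncomputable def uu (k : ℕ) : ℝ := (64/3) * (k:ℝ)^2 / (2*(k:ℝ) - 1) * dd k

lemma fact_ne (k : ℕ) : ((k.factorial : ℝ)) ≠ 0 := by
  exact_mod_cast k.factorial_ne_zero

lemma term_eq_dd (k : ℕ) :
    (poch (3/2) k ^ 2 * poch (-(1/2)) k) / ((k.factorial : ℝ) ^ 2 * ((k + 1).factorial : ℝ))
      * ((2*(k : ℝ) + 1) / (-8 : ℝ) ^ k)
    = -(2*(k:ℝ)+1)^3 / (((k:ℝ)+1)*(2*(k:ℝ)-1)) * dd k := by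
  have hne := two_k_sub_one_ne k
  have hm : poch (-(1/2)) k = - poch (1/2) k / (2*(k:ℝ) - 1) := by
    have := poch_neg_half k
    field_simp
    linarith [this]
  have hfs : (((k+1).factorial : ℝ)) = ((k:ℝ)+1) * (k.factorial : ℝ) := by
    rw [Nat.factorial_succ]
    push_cast
    ring
  have h8 : (-(1/8 : ℝ)) ^ k = ((-8 : ℝ) ^ k)⁻¹ := by
    rw [← inv_pow]
    norm_num
  have h8ne : ((-8 : ℝ) ^ k) ≠ 0 := pow_ne_zero _ (by norm_num)
  rw [poch_three_halves, hm, hfs]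
  unfold dd
  rw [h8]
  have hfne := fact_ne k
  have hk1 : ((k:ℝ)+1) ≠ 0 := by positivity
  field_simp
lemma dd_succ (k : ℕ) : dd (k+1) = dd k * (-(2*(k:ℝ)+1)^3) / (64*((k:ℝ)+1)^3) := by
  unfold dd
  rw [poch_succ, Nat.factorial_succ, pow_succ]
  push_cast
  have hfne := fact_ne k
  have hk1 : ((k:ℝ)+1) ≠ 0 := by positivity
  field_simp
  ring

lemma uu_zero : uu 0 = 0 := by
  simp [uu]

lemma term_split (k : ℕ) :
    (poch (3/2) k ^ 2 * poch (-(1/2)) k) / ((k.factorial : ℝ) ^ 2 * ((k + 1).factorial : ℝ))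
      * ((2*(k : ℝ) + 1) / (-8 : ℝ) ^ k)
    = (4/3) * ((6*(k:ℝ)+1) * dd k) + (uu (k+1) - uu k) := by
  rw [term_eq_dd]
  unfold uu
  rw [dd_succ]
  push_cast
  have hne := two_k_sub_one_ne k
  have hne1 : (2*((k:ℝ)+1) - 1) ≠ 0 := by
    have h0 : (0:ℝ) ≤ (k:ℝ) := Nat.cast_nonneg k
    intro h
    nlinarith
  have hk1 : ((k:ℝ)+1) ≠ 0 := by positivity
  field_simp
  ring
noncomputable def qq (n k : ℕ) : ℝ :=
  poch (1/2) k ^ 3 * (n.choose k : ℝ) * (-1)^k /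
    ((k.factorial : ℝ)^2 * poch (2*(n:ℝ)+3/2) k * 4^k)

noncomputable def tt (n k : ℕ) : ℝ := (6*(k:ℝ)+1) * qq n k

noncomputable def GG (n k : ℕ) : ℝ :=
  (-16) * (4*(n:ℝ)+3) * (4*(n:ℝ)+5) * (k:ℝ)^3 * poch (1/2) k ^ 3 * ((n+1).choose k : ℝ) * (-1)^k /
    (((n:ℝ)+1) * (4*(n:ℝ)+2*(k:ℝ)+3) * (k.factorial : ℝ)^2 * poch (2*(n:ℝ)+3/2) k * 4^k)

lemma poch_big_pos (n k : ℕ) : 0 < poch (2*(n:ℝ)+3/2) k := by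
  apply poch_pos; positivity

lemma choose_rel1 (n k : ℕ) (hk : k ≤ n + 1) :
    (((n+1).choose k : ℕ) : ℝ) * ((n:ℝ)+1-(k:ℝ)) = ((n:ℝ)+1) * ((n.choose k : ℕ) : ℝ) := by
  have h := Nat.choose_mul_succ_eq n k
  have hcast : (((n + 1 - k : ℕ)) : ℝ) = (n:ℝ)+1-(k:ℝ) := by
    rw [Nat.cast_sub (by omega)]; push_cast; ring
  have hc := congrArg (fun m : ℕ => (m:ℝ)) h
  simp only [Nat.cast_mul] at hc
  rw [hcast] at hc
  push_cast at hc
  linarith [hc]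

lemma choose_rel2 (n k : ℕ) :
    (((n+1).choose (k+1) : ℕ) : ℝ) * ((k:ℝ)+1) = ((n:ℝ)+1) * ((n.choose k : ℕ) : ℝ) := by
  have h := Nat.add_one_mul_choose_eq n k
  have hc := congrArg (fun m : ℕ => (m:ℝ)) h
  push_cast at hc
  linarith [hc]

set_option maxHeartbeats 1000000 in
lemma wz_point (n k : ℕ) (hk : k ≤ n + 1) :
    16*((n:ℝ)+1)^2 * tt (n+1) k - (4*(n:ℝ)+3)*(4*(n:ℝ)+5) * tt n k = GG n (k+1) - GG n k := by
  have hP0 : (0:ℝ) < poch (2*(n:ℝ)+3/2) k := poch_big_pos n k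
  have hPne : poch (2*(n:ℝ)+3/2) k ≠ 0 := ne_of_gt hP0
  have hP20 : (0:ℝ) < poch ((2*(n:ℝ)+3/2)+2) k := poch_pos (by positivity) k
  have hP2ne : poch ((2*(n:ℝ)+3/2)+2) k ≠ 0 := ne_of_gt hP20
  have hfne := fact_ne k
  have h4ne : ((4:ℝ)^k) ≠ 0 := pow_ne_zero _ (by norm_num)
  have hm1ne : ((-1:ℝ)^k) ≠ 0 := pow_ne_zero _ (by norm_num)
  have hn1 : ((n:ℝ)+1) ≠ 0 := by positivity
  have hk1 : ((k:ℝ)+1) ≠ 0 := by positivity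
  have harg : 2*((n:ℝ)+1)+3/2 = (2*(n:ℝ)+3/2)+2 := by ring
  have hb1 : (4*(n:ℝ)+2*(k:ℝ)+3) ≠ 0 := by positivity
  have hb7 : (4*(n:ℝ)+2*(k:ℝ)+5) ≠ 0 := by positivity
  have hb3 : (2*(n:ℝ)+3/2) ≠ 0 := by positivity
  have hb4 : (2*(n:ℝ)+3/2)+1 ≠ 0 := by positivity
  have hb5 : (2*(n:ℝ)+3/2)+(k:ℝ) ≠ 0 := by positivity
  have hb6 : (2*(n:ℝ)+3/2)+(k:ℝ)+1 ≠ 0 := by positivity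
  have hC1 := choose_rel1 n k hk
  have hC2 := choose_rel2 n k
  have hP2 := poch_two_shift (2*(n:ℝ)+3/2) k
  have ttnk : tt n k = (6*(k:ℝ)+1) * qq n k := rfl
  by_cases hkn : k ≤ n
  · -- main case k ≤ n
    have hne2 : ((n:ℝ)+1-(k:ℝ)) ≠ 0 := by
      have : (k:ℝ) ≤ (n:ℝ) := by exact_mod_cast hkn
      intro hz; nlinarith
    have eq2 : tt (n+1) k
        = ((6*(k:ℝ)+1) * (((n:ℝ)+1) * ((2*(n:ℝ)+3/2) * ((2*(n:ℝ)+3/2)+1)))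
            / ((((n:ℝ)+1-(k:ℝ)) * (((2*(n:ℝ)+3/2)+(k:ℝ)) * ((2*(n:ℝ)+3/2)+(k:ℝ)+1))))) * qq n k := by
      unfold tt qq
      push_cast
      rw [harg, div_mul_div_comm, ← mul_div_assoc,
          div_eq_div_iff (by positivity) (by
            apply mul_ne_zero (mul_ne_zero hne2 (mul_ne_zero hb5 hb6))
            positivity)]
      linear_combination
        ((6*(k:ℝ)+1) * poch (1/2) k ^3 * (-1:ℝ)^k * (k.factorial:ℝ)^2 * (4:ℝ)^k
          * poch (2*(n:ℝ)+3/2) k * ((2*(n:ℝ)+3/2)+(k:ℝ)) * ((2*(n:ℝ)+3/2)+(k:ℝ)+1)) * hC1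
        + ((6*(k:ℝ)+1) * poch (1/2) k ^3 * (-1:ℝ)^k * (k.factorial:ℝ)^2 * (4:ℝ)^k
          * ((n:ℝ)+1) * ((n.choose k : ℕ):ℝ)) * hP2
    have eq3 : GG n k
        = ((-16) * (4*(n:ℝ)+3) * (4*(n:ℝ)+5) * (k:ℝ)^3
            / ((((n:ℝ)+1-(k:ℝ))) * (4*(n:ℝ)+2*(k:ℝ)+3))) * qq n k := by
      unfold GG qq
      rw [div_mul_div_comm,
          div_eq_div_iff (by positivity) (by
            apply mul_ne_zero (mul_ne_zero hne2 hb1)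
            positivity)]
      linear_combination
        ((-16) * (4*(n:ℝ)+3) * (4*(n:ℝ)+5) * (k:ℝ)^3 * poch (1/2) k ^3 * (-1:ℝ)^k
          * (4*(n:ℝ)+2*(k:ℝ)+3) * (k.factorial:ℝ)^2 * poch (2*(n:ℝ)+3/2) k * (4:ℝ)^k) * hC1
    have eq4 : GG n (k+1)
        = ((4*(n:ℝ)+3) * (4*(n:ℝ)+5) * (2*(k:ℝ)+1)^3
            / ((4*(n:ℝ)+2*(k:ℝ)+3) * (4*(n:ℝ)+2*(k:ℝ)+5))) * qq n k := by
      unfold GG qq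
      have hF : (((k+1).factorial : ℕ):ℝ) = ((k:ℝ)+1) * (k.factorial:ℝ) := by
        rw [Nat.factorial_succ]; push_cast; ring
      rw [hF, poch_succ (1/2) k, poch_succ (2*(n:ℝ)+3/2) k, pow_succ (4:ℝ) k, pow_succ (-1:ℝ) k]
      push_cast
      rw [div_mul_div_comm,
          div_eq_div_iff (by positivity) (by
            apply mul_ne_zero (mul_ne_zero hb1 hb7)
            positivity)]
      linear_combination
        (16 * (4*(n:ℝ)+3) * (4*(n:ℝ)+5) * ((k:ℝ)+1)^2 * poch (1/2) k ^3 * (1/2+(k:ℝ))^3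
          * (-1:ℝ)^k * (4*(n:ℝ)+2*(k:ℝ)+3) * (4*(n:ℝ)+2*(k:ℝ)+5) * (k.factorial:ℝ)^2
          * poch (2*(n:ℝ)+3/2) k * (4:ℝ)^k) * hC2
    rw [eq2, eq3, eq4, ttnk]
    have key : 16*((n:ℝ)+1)^2 * ((6*(k:ℝ)+1) * (((n:ℝ)+1) * ((2*(n:ℝ)+3/2) * ((2*(n:ℝ)+3/2)+1)))
            / ((((n:ℝ)+1-(k:ℝ)) * (((2*(n:ℝ)+3/2)+(k:ℝ)) * ((2*(n:ℝ)+3/2)+(k:ℝ)+1)))))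
          - (4*(n:ℝ)+3)*(4*(n:ℝ)+5) * (6*(k:ℝ)+1)
        = ((4*(n:ℝ)+3) * (4*(n:ℝ)+5) * (2*(k:ℝ)+1)^3
            / ((4*(n:ℝ)+2*(k:ℝ)+3) * (4*(n:ℝ)+2*(k:ℝ)+5)))
          - ((-16) * (4*(n:ℝ)+3) * (4*(n:ℝ)+5) * (k:ℝ)^3
            / ((((n:ℝ)+1-(k:ℝ))) * (4*(n:ℝ)+2*(k:ℝ)+3))) := by
      field_simp
      ring
    linear_combination (qq n k) * key
  · -- boundary case k = n+1
    have hkeq : k = n + 1 := by omega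
    subst hkeq
    have hz1 : n.choose (n+1) = 0 := Nat.choose_succ_self n
    have hz2 : (n+1).choose (n+1+1) = 0 := Nat.choose_succ_self (n+1)
    have hz3 : (n+1).choose (n+1) = 1 := Nat.choose_self (n+1)
    have htn : tt n (n+1) = 0 := by
      unfold tt qq
      rw [hz1]
      simp
    have hGtop : GG n (n+1+1) = 0 := by
      unfold GG
      rw [hz2]
      simp
    rw [htn, hGtop, mul_zero, sub_zero, zero_sub]
    set W : ℝ := poch (1/2) (n+1) ^ 3 * (-1:ℝ)^(n+1)
        / (((n+1).factorial : ℝ)^2 * poch (2*(n:ℝ)+3/2) (n+1) * 4^(n+1)) with hW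
    have hPn1 : (0:ℝ) < poch (2*(n:ℝ)+3/2) (n+1) := poch_big_pos n (n+1)
    have hP2n1 : (0:ℝ) < poch ((2*(n:ℝ)+3/2)+2) (n+1) := poch_pos (by positivity) (n+1)
    have hc5 : (2*(n:ℝ)+3/2)+((n:ℝ)+1) ≠ 0 := by positivity
    have hc6 : (2*(n:ℝ)+3/2)+((n:ℝ)+1)+1 ≠ 0 := by positivity
    have hb2 : (4*(n:ℝ)+2*((n:ℝ)+1)+3) ≠ 0 := by positivity
    have hP2' := poch_two_shift (2*(n:ℝ)+3/2) (n+1)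
    have f1 : tt (n+1) (n+1)
        = ((6*(n:ℝ)+7) * ((2*(n:ℝ)+3/2) * ((2*(n:ℝ)+3/2)+1))
            / (((2*(n:ℝ)+3/2)+((n:ℝ)+1)) * ((2*(n:ℝ)+3/2)+((n:ℝ)+1)+1))) * W := by
      unfold tt qq
      rw [hz3, hW]
      push_cast
      rw [harg, div_mul_div_comm, ← mul_div_assoc,
          div_eq_div_iff (by positivity) (by
            apply mul_ne_zero (mul_ne_zero hc5 hc6)
            positivity)]
      push_cast at hP2' ⊢
      linear_combination
        ((6*(n:ℝ)+7) * poch (1/2) (n+1) ^3 * (-1:ℝ)^(n+1) * ((n+1).factorial:ℝ)^2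
          * (4:ℝ)^(n+1)) * hP2'
    have f2 : GG n (n+1)
        = ((-16) * (4*(n:ℝ)+3) * (4*(n:ℝ)+5) * ((n:ℝ)+1)^2
            / (4*(n:ℝ)+2*((n:ℝ)+1)+3)) * W := by
      unfold GG
      rw [hz3, hW]
      push_cast
      rw [div_mul_div_comm,
          div_eq_div_iff (by positivity) (by
            apply mul_ne_zero hb2 (by positivity))]
      ring
    rw [f1, f2]
    have key2 : 16*((n:ℝ)+1)^2 * ((6*(n:ℝ)+7) * ((2*(n:ℝ)+3/2) * ((2*(n:ℝ)+3/2)+1))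
            / (((2*(n:ℝ)+3/2)+((n:ℝ)+1)) * ((2*(n:ℝ)+3/2)+((n:ℝ)+1)+1)))
        = -(((-16) * (4*(n:ℝ)+3) * (4*(n:ℝ)+5) * ((n:ℝ)+1)^2
            / (4*(n:ℝ)+2*((n:ℝ)+1)+3))) := by
      field_simp
      ring
    linear_combination W * key2
noncomputable def ss (n : ℕ) : ℝ := ∑ k ∈ Finset.range (n+1), tt n k

lemma tt_zero_of_lt {n k : ℕ} (h : n < k) : tt n k = 0 := by
  unfold tt qq
  rw [Nat.choose_eq_zero_of_lt h]
  simp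

lemma GG_zero_left (n : ℕ) : GG n 0 = 0 := by
  unfold GG
  norm_num

lemma ss_rec (n : ℕ) :
    16*((n:ℝ)+1)^2 * ss (n+1) = (16*((n:ℝ)+1)^2 - 1) * ss n := by
  have htel : ∑ k ∈ Finset.range (n+2), (GG n (k+1) - GG n k) = GG n (n+2) - GG n 0 :=
    Finset.sum_range_sub (fun k => GG n k) (n+2)
  have hz2 : GG n (n+2) = 0 := by
    unfold GG
    rw [show n+2 = (n+1)+1 from rfl, Nat.choose_succ_self (n+1)]
    simp
  have hsum : ∑ k ∈ Finset.range (n+2),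
      (16*((n:ℝ)+1)^2 * tt (n+1) k - (4*(n:ℝ)+3)*(4*(n:ℝ)+5) * tt n k) = 0 := by
    rw [Finset.sum_congr rfl (fun k hk => wz_point n k (by
      simpa using Nat.lt_succ_iff.mp (Finset.mem_range.mp hk)))]
    rw [htel, hz2, GG_zero_left, sub_zero]
  rw [Finset.sum_sub_distrib, ← Finset.mul_sum, ← Finset.mul_sum] at hsum
  have hs1 : ∑ k ∈ Finset.range (n+2), tt (n+1) k = ss (n+1) := rfl
  have hs2 : ∑ k ∈ Finset.range (n+2), tt n k = ss n := by
    rw [Finset.sum_range_succ, tt_zero_of_lt (Nat.lt_succ_self n), add_zero]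
    rfl
  rw [hs1, hs2] at hsum
  have : (4*(n:ℝ)+3)*(4*(n:ℝ)+5) = 16*((n:ℝ)+1)^2 - 1 := by ring
  linarith [hsum]

lemma ss_zero : ss 0 = 1 := by
  unfold ss
  rw [Finset.sum_range_one]
  unfold tt qq
  norm_num [poch_zero]

lemma ss_prod (n : ℕ) :
    ss n = ∏ j ∈ Finset.range n, ((1:ℝ) - (1/4)^2 / ((j:ℝ)+1)^2) := by
  induction n with
  | zero => simpa using ss_zero
  | succ n ih =>
      have h16 : (16*((n:ℝ)+1)^2) ≠ 0 := by positivity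
      have hrec := ss_rec n
      have : ss (n+1) = (16*((n:ℝ)+1)^2 - 1) / (16*((n:ℝ)+1)^2) * ss n := by
        field_simp
        linarith [hrec]
      rw [this, ih, Finset.prod_range_succ, mul_comm (∏ j ∈ Finset.range n, ((1:ℝ) - (1/4)^2 / ((j:ℝ)+1)^2))]
      congr 1
      field_simp
      ring
open Filter Topology

lemma choose_mul_factorial_eq_prod (n k : ℕ) :
    ((n.choose k : ℕ) : ℝ) * (k.factorial : ℝ) = ∏ i ∈ Finset.range k, ((n:ℝ) - i) := by
  induction k with
  | zero => simp
  | succ k ih =>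
      rw [Finset.prod_range_succ, ← ih]
      have h := Nat.choose_succ_right_eq n k
      have hc := congrArg (fun m : ℕ => (m:ℝ)) h
      push_cast at hc
      have hF : (((k+1).factorial : ℕ):ℝ) = ((k:ℝ)+1) * (k.factorial:ℝ) := by
        rw [Nat.factorial_succ]; push_cast; ring
      rw [hF]
      by_cases hkn : k ≤ n
      · have hsub : (((n - k : ℕ)) : ℝ) = (n:ℝ) - k := by
          rw [Nat.cast_sub hkn]
        rw [hsub] at hc
        nlinarith [hc]
      · have h1 : n.choose (k+1) = 0 := Nat.choose_eq_zero_of_lt (by omega)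
        have h3 : n.choose k = 0 := Nat.choose_eq_zero_of_lt (by omega)
        rw [h1, h3]
        simp

lemma tt_eq_prod (n k : ℕ) :
    tt n k = (6*(k:ℝ)+1) * poch (1/2) k ^ 3 * (-1)^k / ((k.factorial : ℝ)^3 * 4^k)
      * ∏ i ∈ Finset.range k, (((n:ℝ) - i) / (2*(n:ℝ)+3/2+i)) := by
  have hden : ∏ i ∈ Finset.range k, (2*(n:ℝ)+3/2+(i:ℝ)) = poch (2*(n:ℝ)+3/2) k := rfl
  rw [Finset.prod_div_distrib, hden, ← choose_mul_factorial_eq_prod]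
  unfold tt qq
  have hPne : poch (2*(n:ℝ)+3/2) k ≠ 0 := ne_of_gt (poch_big_pos n k)
  have hfne := fact_ne k
  have h4ne : ((4:ℝ)^k) ≠ 0 := pow_ne_zero _ (by norm_num)
  rw [div_mul_div_comm, ← mul_div_assoc,
      div_eq_div_iff (by positivity) (by
        apply mul_ne_zero (by positivity) hPne)]
  ring

lemma tendsto_ratio (i : ℕ) :
    Tendsto (fun n : ℕ => ((n:ℝ) - i) / (2*(n:ℝ)+3/2+i)) atTop (𝓝 (1/2)) := by
  have hden : Tendsto (fun n : ℕ => 4*(n:ℝ) + (3+2*(i:ℝ))) atTop atTop :=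
    tendsto_atTop_add_const_right _ _
      (Tendsto.const_mul_atTop (by norm_num) tendsto_natCast_atTop_atTop)
  have h0 : Tendsto (fun n : ℕ => (3/2+3*(i:ℝ)) / (4*(n:ℝ) + (3+2*(i:ℝ)))) atTop (𝓝 0) :=
    Tendsto.div_atTop tendsto_const_nhds hden
  have h1 : Tendsto (fun n : ℕ => 1/2 - (3/2+3*(i:ℝ)) / (4*(n:ℝ) + (3+2*(i:ℝ)))) atTop (𝓝 (1/2)) := by
    simpa using tendsto_const_nhds.sub h0
  apply h1.congr
  intro n
  have hd1 : (2*(n:ℝ)+3/2+(i:ℝ)) ≠ 0 := by positivity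
  have hd2 : (4*(n:ℝ) + (3+2*(i:ℝ))) ≠ 0 := by positivity
  field_simp
  ring

lemma tt_tendsto (k : ℕ) :
    Tendsto (fun n : ℕ => tt n k) atTop (𝓝 ((6*(k:ℝ)+1) * dd k)) := by
  have hprod : Tendsto (fun n : ℕ => ∏ i ∈ Finset.range k, (((n:ℝ) - i) / (2*(n:ℝ)+3/2+i)))
      atTop (𝓝 (∏ _i ∈ Finset.range k, (1/2:ℝ))) :=
    tendsto_finset_prod _ (fun i _ => tendsto_ratio i)
  have h := hprod.const_mul ((6*(k:ℝ)+1) * poch (1/2) k ^ 3 * (-1:ℝ)^k / ((k.factorial : ℝ)^3 * 4^k))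
  have hval : (6*(k:ℝ)+1) * poch (1/2) k ^ 3 * (-1:ℝ)^k / ((k.factorial : ℝ)^3 * 4^k)
      * (∏ _i ∈ Finset.range k, (1/2:ℝ)) = (6*(k:ℝ)+1) * dd k := by
    rw [Finset.prod_const, Finset.card_range]
    unfold dd
    have h8 : (-(1/8:ℝ))^k = (-1:ℝ)^k * (1/2:ℝ)^k * ((4:ℝ)^k)⁻¹ := by
      rw [← inv_pow, ← mul_pow, ← mul_pow]
      norm_num
    rw [h8]
    have hfne := fact_ne k
    have h4ne : ((4:ℝ)^k) ≠ 0 := pow_ne_zero _ (by norm_num)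
    field_simp
  rw [hval] at h
  apply h.congr
  intro n
  exact (tt_eq_prod n k).symm

lemma tt_bound (n k : ℕ) : |tt n k| ≤ (6*(k:ℝ)+1) * (1/8)^k := by
  by_cases hkn : n < k
  · rw [tt_zero_of_lt hkn]
    simp
    positivity
  · push_neg at hkn
    rw [tt_eq_prod]
    rw [abs_mul]
    have hXpos := poch_half_pos k
    have hXle := poch_half_le_factorial k
    have hFpos : (0:ℝ) < (k.factorial : ℝ) := by
      exact_mod_cast k.factorial_pos
    have h1 : |(6*(k:ℝ)+1) * poch (1/2) k ^ 3 * (-1:ℝ)^k / ((k.factorial : ℝ)^3 * 4^k)|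
        ≤ (6*(k:ℝ)+1) * (1/4)^k := by
      rw [abs_div, abs_mul, abs_mul, abs_pow, abs_pow, abs_neg, abs_one, one_pow, mul_one,
          abs_of_pos hXpos]
      have hd : |(k.factorial : ℝ)^3 * 4^k| = (k.factorial : ℝ)^3 * 4^k := by
        rw [abs_of_pos]; positivity
      rw [hd, abs_of_nonneg (by positivity : (0:ℝ) ≤ 6*(k:ℝ)+1)]
      rw [div_le_iff₀ (by positivity)]
      have hX3 : poch (1/2) k ^ 3 ≤ (k.factorial : ℝ)^3 := by
        apply pow_le_pow_left₀ hXpos.le hXle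
      have h4 : ((1/4:ℝ))^k * (4:ℝ)^k = 1 := by
        rw [← mul_pow]; norm_num
      calc (6*(k:ℝ)+1) * poch (1/2) k ^ 3 ≤ (6*(k:ℝ)+1) * (k.factorial : ℝ)^3 := by
            apply mul_le_mul_of_nonneg_left hX3 (by positivity)
        _ = (6*(k:ℝ)+1) * (1/4)^k * ((k.factorial : ℝ)^3 * 4^k) := by
            rw [show (6*(k:ℝ)+1) * (1/4)^k * ((k.factorial : ℝ)^3 * 4^k)
              = (6*(k:ℝ)+1) * (k.factorial : ℝ)^3 * ((1/4:ℝ)^k * (4:ℝ)^k) from by ring, h4, mul_one]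
    have h2 : |∏ i ∈ Finset.range k, (((n:ℝ) - i) / (2*(n:ℝ)+3/2+i))| ≤ (1/2:ℝ)^k := by
      have hnn : ∀ i ∈ Finset.range k, (0:ℝ) ≤ ((n:ℝ) - i) / (2*(n:ℝ)+3/2+i) := by
        intro i hi
        have hik : i < k := Finset.mem_range.mp hi
        have hin : (i:ℝ) ≤ (n:ℝ) := by
          have : i ≤ n := by omega
          exact_mod_cast this
        apply div_nonneg (by linarith) (by positivity)
      rw [abs_of_nonneg (Finset.prod_nonneg hnn)]
      have : (1/2:ℝ)^k = ∏ _i ∈ Finset.range k, (1/2:ℝ) := by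
        rw [Finset.prod_const, Finset.card_range]
      rw [this]
      apply Finset.prod_le_prod hnn
      intro i hi
      have hik : i < k := Finset.mem_range.mp hi
      have hin : (i:ℝ) ≤ (n:ℝ) := by
        have : i ≤ n := by omega
        exact_mod_cast this
      rw [div_le_iff₀ (by positivity)]
      have : (0:ℝ) ≤ (i:ℝ) := Nat.cast_nonneg i
      linarith
    calc |(6*(k:ℝ)+1) * poch (1/2) k ^ 3 * (-1:ℝ)^k / ((k.factorial : ℝ)^3 * 4^k)|
          * |∏ i ∈ Finset.range k, (((n:ℝ) - i) / (2*(n:ℝ)+3/2+i))|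
        ≤ ((6*(k:ℝ)+1) * (1/4)^k) * (1/2:ℝ)^k := by
          apply mul_le_mul h1 h2 (abs_nonneg _) (by positivity)
      _ = (6*(k:ℝ)+1) * (1/8)^k := by
          rw [show (1/8:ℝ) = (1/4)*(1/2) by norm_num, mul_pow]
          ring
lemma summable_bound8 : Summable (fun k : ℕ => (6*(k:ℝ)+1)*(1/8:ℝ)^k) := by
  have h1 : Summable (fun k : ℕ => (k:ℝ)^1 * (1/8:ℝ)^k) :=
    summable_pow_mul_geometric_of_norm_lt_one 1 (by rw [Real.norm_eq_abs, abs_of_nonneg (by norm_num : (0:ℝ) ≤ 1/8)]; norm_num)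
  have h2 : Summable (fun k : ℕ => (1/8:ℝ)^k) :=
    summable_geometric_of_lt_one (by norm_num) (by norm_num)
  apply ((h1.mul_left 6).add h2).congr
  intro k
  ring

lemma dd_abs_le (k : ℕ) : |dd k| ≤ (1/8:ℝ)^k := by
  unfold dd
  have hXpos := poch_half_pos k
  have hXle := poch_half_le_factorial k
  have hFpos : (0:ℝ) < (k.factorial : ℝ) := by exact_mod_cast k.factorial_pos
  rw [abs_div, abs_mul, abs_pow, abs_pow, abs_pow, abs_of_pos hXpos, abs_of_pos hFpos,
      show |(-(1/8:ℝ))| = 1/8 by norm_num]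
  rw [div_le_iff₀ (by positivity)]
  have hX3 : poch (1/2) k ^ 3 ≤ (k.factorial : ℝ)^3 := pow_le_pow_left₀ hXpos.le hXle 3
  have h8 : (0:ℝ) < (1/8:ℝ)^k := by positivity
  nlinarith [hX3, h8]

lemma summable_six_dd : Summable (fun k : ℕ => (6*(k:ℝ)+1) * dd k) := by
  apply Summable.of_norm_bounded summable_bound8
  intro k
  rw [Real.norm_eq_abs, abs_mul, abs_of_nonneg (by positivity : (0:ℝ) ≤ 6*(k:ℝ)+1)]
  exact mul_le_mul_of_nonneg_left (dd_abs_le k) (by positivity)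

lemma uu_abs_le (k : ℕ) : |uu k| ≤ (64/3)*(k:ℝ)*(1/8:ℝ)^k := by
  cases k with
  | zero => simp [uu_zero]
  | succ m =>
      set k := m + 1
      have hk1 : (1:ℝ) ≤ (k:ℝ) := by exact_mod_cast Nat.one_le_iff_ne_zero.mpr (by omega)
      have h2k : (0:ℝ) < 2*(k:ℝ)-1 := by linarith
      unfold uu
      rw [abs_mul, abs_div, abs_mul,
          abs_of_nonneg (by norm_num : (0:ℝ) ≤ (64/3:ℝ)),
          abs_of_nonneg (by positivity : (0:ℝ) ≤ (k:ℝ)^2),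
          abs_of_pos h2k]
      have hfrac : (64/3:ℝ) * (k:ℝ)^2 / (2*(k:ℝ)-1) ≤ (64/3)*(k:ℝ) := by
        rw [div_le_iff₀ h2k]
        nlinarith
      calc (64/3:ℝ) * (k:ℝ)^2 / (2*(k:ℝ)-1) * |dd k|
          ≤ (64/3)*(k:ℝ) * (1/8:ℝ)^k := by
            apply mul_le_mul hfrac (dd_abs_le k) (abs_nonneg _) (by positivity)

lemma summable_uu : Summable uu := by
  apply Summable.of_norm_bounded (Summable.mul_left (64/3)
    (summable_pow_mul_geometric_of_norm_lt_one 1 (r := (1/8:ℝ)) (by rw [Real.norm_eq_abs, abs_of_nonneg (by norm_num : (0:ℝ) ≤ 1/8)]; norm_num)))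
  intro k
  rw [Real.norm_eq_abs]
  exact (uu_abs_le k).trans (le_of_eq (by ring))

lemma tsum_tt (n : ℕ) : ∑' k, tt n k = ss n := by
  have h : ∀ k ∉ Finset.range (n+1), tt n k = 0 := by
    intro k hk
    simp only [Finset.mem_range, not_lt] at hk
    exact tt_zero_of_lt (by omega)
  rw [tsum_eq_sum h]
  rfl

lemma euler_limit : Tendsto ss atTop (𝓝 (2*Real.sqrt 2 / Real.pi)) := by
  have h := Real.tendsto_euler_sin_prod (1/4)
  have harg : Real.pi * (1/4) = Real.pi/4 := by ring
  rw [harg, Real.sin_pi_div_four] at h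
  have hπ := Real.pi_ne_zero
  have h2 := h.const_mul (4/Real.pi)
  have hfun : ∀ n : ℕ, (4/Real.pi) * (Real.pi/4 * ∏ j ∈ Finset.range n, ((1:ℝ) - (1/4)^2/((j:ℝ)+1)^2))
      = ss n := by
    intro n
    rw [ss_prod n, ← mul_assoc, show (4/Real.pi) * (Real.pi/4) = 1 by field_simp, one_mul]
  have hval : (4/Real.pi) * (Real.sqrt 2 / 2) = 2*Real.sqrt 2 / Real.pi := by
    rw [div_mul_div_comm, div_eq_div_iff (by positivity) hπ]
    ring
  rw [hval] at h2
  exact h2.congr hfun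

lemma key_tsum : ∑' k : ℕ, ((6*(k:ℝ)+1) * dd k) = 2*Real.sqrt 2 / Real.pi := by
  have hdom := tendsto_tsum_of_dominated_convergence (f := fun (n : ℕ) (k : ℕ) => tt n k)
    (𝓕 := atTop) summable_bound8 tt_tendsto
    (Filter.Eventually.of_forall (fun n => fun k => by
      rw [Real.norm_eq_abs]; exact tt_bound n k))
  have h2 : Tendsto ss atTop (𝓝 (∑' k : ℕ, ((6*(k:ℝ)+1) * dd k))) := by
    apply hdom.congr
    intro n
    exact tsum_tt n
  exact tendsto_nhds_unique h2 euler_limit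
theorem example_thm4_p0q0 :
    ∑' k : ℕ, (poch (3/2) k ^ 2 * poch (-(1/2)) k) / ((k.factorial : ℝ) ^ 2 * ((k + 1).factorial : ℝ)) * ((2*(k : ℝ) + 1) / (-8 : ℝ) ^ k) = 8 * Real.sqrt 2 / (3 * Real.pi) := by
  have hterm := term_split
  rw [tsum_congr hterm]
  have hsum1 : Summable (fun k : ℕ => (4/3 : ℝ) * ((6*(k:ℝ)+1) * dd k)) :=
    summable_six_dd.mul_left _
  have hsum_u1 : Summable (fun k : ℕ => uu (k+1)) := (summable_nat_add_iff 1).2 summable_uu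
  have hsum2 : Summable (fun k : ℕ => uu (k+1) - uu k) := hsum_u1.sub summable_uu
  rw [Summable.tsum_add hsum1 hsum2, tsum_mul_left, key_tsum, Summable.tsum_sub hsum_u1 summable_uu]
  have htel : ∑' k : ℕ, uu (k+1) = (∑' k : ℕ, uu k) - uu 0 := by
    have h := Summable.tsum_eq_zero_add summable_uu
    linarith [h]
  rw [htel, uu_zero]
  have hπ := Real.pi_ne_zero
  field_simp
  ring
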